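/- Let V be a finite set of size k, g ≥ 2 an integer, 0 < ε₁ < ε∞, ε_IRR = ln((e^{ε∞+ε₁}−1)/(e^{ε∞}−e^{ε₁})), and set p₁ = e^{ε∞}/(e^{ε∞}+g−1), q₁' = 1/g, p₂ = e^{ε_IRR}/(e^{ε_IRR}+g−1), q₂ = 1/(e^{ε_IRR}+g−1). Let ℋ be a pairwise-independent family of hash functions V → {1,…,g}. There are n users; user u holds v_u ∈ V and, independently across users, samples H_u uniformly from ℋ and reports x''_u = GRR(GRR(H_u(v_u); ε∞); ε_IRR) on {1,…,g}. Let f(v) = |{u : v_u = v}|/n, C(v) = |{u : H_u(v) = x''_u}|, and f̂(v) = (C(v) − n·q₁'·(p₂−q₂) − n·q₂)/(n·(p₁−q₁')·(p₂−q₂)). Then for every β ∈ (0,1), with probability at least 1 − β, max_{v ∈ V} |f̂(v) − f(v)| < sqrt( k / (4·n·β·(p₁−q₁')²·(p₂−q₂)²) ). -/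

import Mathlib

noncomputable section

/-- One user's sample point in the LOLOHA generative model: the hash function,
the memoized PRR output, and the reported IRR output. -/
abbrev LolohaSample (V : Type) (g : ℕ) : Type := (V → Fin g) × Fin g × Fin g

/-- Probability weight of a joint outcome `ω` of `n` independent users, where user `u`
holds `vu u`, samples `H_u` uniformly from `ℋ`, memoizes `z_u = GRR(H_u(v_u); ε∞)`
(keep-probability `p₁`, switch-probability `q₁`) and reports
`x''_u = GRR(z_u; ε_IRR)` (probabilities `p₂`, `q₂`). -/
def lolohaWeight (V : Type) [Fintype V] [DecidableEq V] (g n : ℕ)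
    (ℋ : Finset (V → Fin g)) (p₁ q₁ p₂ q₂ : ℝ)
    (vu : Fin n → V) (ω : Fin n → LolohaSample V g) : ℝ :=
  ∏ u : Fin n,
    ((if (ω u).1 ∈ ℋ then (1 : ℝ) / ℋ.card else 0) *
     (if (ω u).2.1 = (ω u).1 (vu u) then p₁ else q₁) *
     (if (ω u).2.2 = (ω u).2.1 then p₂ else q₂))

/-- The server-side support count `C(v) = |{u : H_u(v) = x''_u}|`. -/
def lolohaCount (V : Type) [Fintype V] [DecidableEq V] (g n : ℕ)
    (v : V) (ω : Fin n → LolohaSample V g) : ℕ :=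
  (Finset.univ.filter fun u : Fin n => (ω u).1 v = (ω u).2.2).card

/-- The LOLOHA frequency estimator
`f̂(v) = (C(v) − n·q₁'·(p₂−q₂) − n·q₂) / (n·(p₁−q₁')·(p₂−q₂))`. -/
def lolohaEst (V : Type) [Fintype V] [DecidableEq V] (g n : ℕ)
    (p₁ q₁' p₂ q₂ : ℝ) (v : V) (ω : Fin n → LolohaSample V g) : ℝ :=
  ((lolohaCount V g n v ω : ℝ) - n * q₁' * (p₂ - q₂) - n * q₂) /
    (n * (p₁ - q₁') * (p₂ - q₂))

/-- The true frequency `f(v) = |{u : v_u = v}| / n`. -/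
def lolohaTrueFreq (V : Type) [DecidableEq V] (n : ℕ) (vu : Fin n → V) (v : V) : ℝ :=
  ((Finset.univ.filter fun u : Fin n => vu u = v).card : ℝ) / n

end

open scoped Classical



lemma sum_ite_const' {g : ℕ} (P Q : ℝ) (z : Fin g) :
    ∑ x : Fin g, (if x = z then P else Q) = P + ((g : ℝ) - 1) * Q := by
  have h : ∀ x : Fin g, (if x = z then P else Q) = (if x = z then P - Q else 0) + Q := by
    intro x; split_ifs <;> ring
  rw [Finset.sum_congr rfl fun x _ => h x, Finset.sum_add_distrib,
    Finset.sum_ite_eq' Finset.univ z fun _ => P - Q]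
  simp
  ring

lemma prod_sum_pi' {n : ℕ} {α : Type*} [Fintype α] (f : Fin n → α → ℝ) :
    ∑ ω : Fin n → α, ∏ u, f u (ω u) = ∏ u, ∑ s, f u s := by
  rw [Finset.prod_univ_sum, Fintype.piFinset_univ]

lemma prod_two_ite' {n : ℕ} {u u' : Fin n} (h : u ≠ u') (A B : Fin n → ℝ) :
    ∏ w : Fin n, (if w = u then A w else if w = u' then B w else 1) = A u * B u' := by
  rw [← Finset.mul_prod_erase Finset.univ _ (Finset.mem_univ u)]
  have hu' : u' ∈ Finset.univ.erase u := Finset.mem_erase.2 ⟨h.symm, Finset.mem_univ u'⟩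
  rw [← Finset.mul_prod_erase _ _ hu']
  have h1 : (if u = u then A u else if u = u' then B u else 1) = A u := by simp
  have h2 : (if u' = u then A u' else if u' = u' then B u' else 1) = B u' := by simp [h.symm]
  rw [h1, h2, Finset.prod_eq_one, mul_one]
  intro w hw
  simp only [Finset.mem_erase] at hw
  simp [hw.1, hw.2.1]

lemma sum_biUnion_le' {ι α : Type*} [DecidableEq α] (s : Finset ι) (t : ι → Finset α)
    (f : α → ℝ) (hf : ∀ a, 0 ≤ f a) :
    ∑ a ∈ s.biUnion t, f a ≤ ∑ i ∈ s, ∑ a ∈ t i, f a := by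
  induction s using Finset.induction with
  | empty => simp
  | @insert i s hi ih =>
    rw [Finset.biUnion_insert, Finset.sum_insert hi]
    have h1 : ∑ a ∈ t i ∪ s.biUnion t, f a ≤ ∑ a ∈ t i, f a + ∑ a ∈ s.biUnion t, f a := by
      have := Finset.sum_union_inter (s₁ := t i) (s₂ := s.biUnion t) (f := f)
      have h0 : 0 ≤ ∑ a ∈ t i ∩ s.biUnion t, f a := Finset.sum_nonneg fun a _ => hf a
      linarith
    linarith [ih]

lemma pairwise_count_sum' {V : Type} [Fintype V] [DecidableEq V] {g : ℕ} (hg : 0 < g)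
    (ℋ : Finset (V → Fin g)) {v w : V}
    (hpi : ∀ a b : Fin g, (ℋ.filter fun H => H v = a ∧ H w = b).card * g ^ 2 = ℋ.card)
    (F : Fin g → Fin g → ℝ) :
    ∑ H ∈ ℋ, F (H v) (H w) = (ℋ.card : ℝ) * (∑ a : Fin g, ∑ b : Fin g, F a b) / (g ^ 2 : ℝ) := by
  have h1 : ∑ H ∈ ℋ, F (H v) (H w)
      = ∑ p : Fin g × Fin g, ∑ H ∈ ℋ.filter (fun H => (H v, H w) = p), F (H v) (H w) :=
    (Finset.sum_fiberwise_of_maps_to (fun H _ => Finset.mem_univ ((H v, H w))) _).symm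
  have h2 : ∀ p : Fin g × Fin g,
      ∑ H ∈ ℋ.filter (fun H => (H v, H w) = p), F (H v) (H w)
        = ((ℋ.filter fun H => H v = p.1 ∧ H w = p.2).card : ℝ) * F p.1 p.2 := by
    intro p
    have hfe : ℋ.filter (fun H => (H v, H w) = p) = ℋ.filter (fun H => H v = p.1 ∧ H w = p.2) := by
      apply Finset.filter_congr; intro H _; simp [Prod.ext_iff]
    rw [hfe]
    rw [Finset.sum_congr rfl (fun H hH => ?_), Finset.sum_const, nsmul_eq_mul]
    have := (Finset.mem_filter.1 hH).2
    rw [this.1, this.2]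
  rw [h1, Finset.sum_congr rfl fun p _ => h2 p]
  have hg2 : ((g : ℝ) ^ 2) ≠ 0 := by positivity
  rw [eq_div_iff hg2, Finset.sum_mul, ← Fintype.sum_prod_type', Finset.mul_sum]
  apply Finset.sum_congr rfl
  intro p _
  have hcast : ((ℋ.filter fun H => H v = p.1 ∧ H w = p.2).card : ℝ) * (g:ℝ) ^ 2 = (ℋ.card : ℝ) := by
    exact_mod_cast congrArg (Nat.cast : ℕ → ℝ) (hpi p.1 p.2)
  linear_combination (F p.1 p.2) * hcast

lemma quad_bound' (m : ℝ) : (1 - 2 * m) * m + (m * m) * 1 ≤ 1/4 := by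
  nlinarith [sq_nonneg (1 - 2 * m)]

set_option maxHeartbeats 2000000 in
/-- **Asymptotic utility guarantee of LOLOHA.** Under the LOLOHA generative model,
for every `β ∈ (0,1)`, with probability at least `1 − β`,
`max_{v ∈ V} |f̂(v) − f(v)| < sqrt(k / (4·n·β·(p₁−q₁')²·(p₂−q₂)²))`. -/
theorem loloha_utility_guarantee
    (V : Type) [Fintype V] [DecidableEq V] (k g n : ℕ)
    (hk : Fintype.card V = k) (hg : 2 ≤ g) (hn : 1 ≤ n)
    (ε₁ εinf : ℝ) (h₁ : 0 < ε₁) (h₂ : ε₁ < εinf)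
    (εIRR : ℝ)
    (hεIRR : εIRR = Real.log ((Real.exp (εinf + ε₁) - 1) / (Real.exp εinf - Real.exp ε₁)))
    (p₁ q₁ q₁' p₂ q₂ : ℝ)
    (hp₁ : p₁ = Real.exp εinf / (Real.exp εinf + g - 1))
    (hq₁ : q₁ = 1 / (Real.exp εinf + g - 1))
    (hq₁' : q₁' = 1 / (g : ℝ))
    (hp₂ : p₂ = Real.exp εIRR / (Real.exp εIRR + g - 1))
    (hq₂ : q₂ = 1 / (Real.exp εIRR + g - 1))
    (ℋ : Finset (V → Fin g)) (hne : ℋ.Nonempty)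
    (hpi : ∀ v w : V, v ≠ w → ∀ a b : Fin g,
      (ℋ.filter fun H => H v = a ∧ H w = b).card * g ^ 2 = ℋ.card)
    (vu : Fin n → V)
    (β : ℝ) (hβ0 : 0 < β) (hβ1 : β < 1) :
    1 - β ≤
      ∑ ω ∈ Finset.univ.filter (fun ω : Fin n → LolohaSample V g =>
          ∀ v : V, |lolohaEst V g n p₁ q₁' p₂ q₂ v ω - lolohaTrueFreq V n vu v| <
            Real.sqrt ((k : ℝ) / (4 * n * β * (p₁ - q₁') ^ 2 * (p₂ - q₂) ^ 2))),
        lolohaWeight V g n ℋ p₁ q₁ p₂ q₂ vu ω := by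
  classical
  -- scalar facts
  have hgR : (2:ℝ) ≤ (g:ℝ) := by exact_mod_cast hg
  have hg0 : (0:ℝ) < (g:ℝ) := by linarith
  have hgn0 : (g:ℝ) ≠ 0 := ne_of_gt hg0
  have hn0 : (0:ℝ) < (n:ℝ) := by exact_mod_cast hn
  have hE : 1 < Real.exp εinf := by
    rw [show (1:ℝ) = Real.exp 0 from (Real.exp_zero).symm]
    exact Real.exp_lt_exp.2 (by linarith)
  have hF : 1 < Real.exp εIRR := by
    have hden : 0 < Real.exp εinf - Real.exp ε₁ := sub_pos.2 (Real.exp_lt_exp.2 h₂)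
    have he1 : 1 < Real.exp ε₁ := by
      rw [show (1:ℝ) = Real.exp 0 from (Real.exp_zero).symm]
      exact Real.exp_lt_exp.2 h₁
    have hnum : Real.exp εinf - Real.exp ε₁ < Real.exp (εinf + ε₁) - 1 := by
      have := Real.exp_add εinf ε₁
      nlinarith
    have hR : 1 < (Real.exp (εinf + ε₁) - 1) / (Real.exp εinf - Real.exp ε₁) :=
      (one_lt_div hden).2 hnum
    rw [hεIRR, Real.exp_log (by linarith)]
    exact hR
  have hD₁ : 0 < Real.exp εinf + (g:ℝ) - 1 := by linarith
  have hD₂ : 0 < Real.exp εIRR + (g:ℝ) - 1 := by linarith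
  have hp₁q₁ : p₁ + ((g:ℝ) - 1) * q₁ = 1 := by rw [hp₁, hq₁]; field_simp; ring
  have hp₂q₂ : p₂ + ((g:ℝ) - 1) * q₂ = 1 := by rw [hp₂, hq₂]; field_simp; ring
  have hq₁0 : 0 < q₁ := by rw [hq₁]; positivity
  have hp₁0 : 0 < p₁ := by rw [hp₁]; positivity
  have hq₂0 : 0 < q₂ := by rw [hq₂]; positivity
  have hp₂0 : 0 < p₂ := by rw [hp₂]; positivity
  have ha : 0 < p₁ - q₁' := by
    rw [hp₁, hq₁']
    rw [sub_pos, div_lt_div_iff₀ hg0 hD₁]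
    nlinarith
  have hb : 0 < p₂ - q₂ := by
    rw [hp₂, hq₂, div_sub_div_same]
    exact div_pos (by linarith) hD₂
  have hA : p₁ * p₂ + ((g:ℝ) - 1) * (q₁ * q₂) = q₁' + (p₁ - q₁') * (p₂ - q₂) := by
    rw [hp₁, hq₁, hp₂, hq₂, hq₁']
    field_simp
    ring
  have hqb : q₁' * (p₂ - q₂) + q₂ = q₁' := by
    rw [hq₁']
    field_simp
    linear_combination hp₂q₂
  -- per-user weight
  set w : Fin n → LolohaSample V g → ℝ := fun u s =>
    (if s.1 ∈ ℋ then (1 : ℝ) / ℋ.card else 0) *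
    (if s.2.1 = s.1 (vu u) then p₁ else q₁) *
    (if s.2.2 = s.2.1 then p₂ else q₂) with hwdef
  have hWeq : ∀ ω, lolohaWeight V g n ℋ p₁ q₁ p₂ q₂ vu ω = ∏ u, w u (ω u) := fun _ => rfl
  have hc0 : (0:ℝ) < (ℋ.card : ℝ) := by exact_mod_cast Finset.card_pos.2 hne
  have hw_nonneg : ∀ u s, 0 ≤ w u s := by
    intro u s
    simp only [hwdef]
    apply mul_nonneg (mul_nonneg ?_ ?_) ?_ <;> split_ifs <;>
      first | positivity | linarith
  have hW_nonneg : ∀ ω, 0 ≤ lolohaWeight V g n ℋ p₁ q₁ p₂ q₂ vu ω := by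
    intro ω; rw [hWeq]; exact Finset.prod_nonneg fun u _ => hw_nonneg u (ω u)
  have hHsum : ∑ H : V → Fin g, (if H ∈ ℋ then (1:ℝ)/ℋ.card else 0) = 1 := by
    rw [Finset.sum_ite_mem, Finset.univ_inter, Finset.sum_const, nsmul_eq_mul]
    field_simp
  have hw_sum : ∀ u, ∑ s : LolohaSample V g, w u s = 1 := by
    intro u
    simp only [hwdef]
    rw [Fintype.sum_prod_type]
    have hinner : ∀ H : V → Fin g,
        ∑ zx : Fin g × Fin g, ((if H ∈ ℋ then (1:ℝ)/ℋ.card else 0) *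
          (if zx.1 = H (vu u) then p₁ else q₁) * (if zx.2 = zx.1 then p₂ else q₂))
        = (if H ∈ ℋ then (1:ℝ)/ℋ.card else 0) := by
      intro H
      rw [Fintype.sum_prod_type]
      have h1 : ∀ z : Fin g, ∑ x : Fin g, ((if H ∈ ℋ then (1:ℝ)/ℋ.card else 0) *
          (if z = H (vu u) then p₁ else q₁) * (if x = z then p₂ else q₂))
          = (if H ∈ ℋ then (1:ℝ)/ℋ.card else 0) * (if z = H (vu u) then p₁ else q₁) := by
        intro z
        rw [← Finset.mul_sum, sum_ite_const' p₂ q₂ z]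
        rw [hp₂q₂, mul_one]
      rw [Finset.sum_congr rfl fun z _ => h1 z, ← Finset.mul_sum, sum_ite_const' p₁ q₁ (H (vu u)),
        hp₁q₁, mul_one]
    rw [Finset.sum_congr rfl fun H _ => hinner H, hHsum]
  -- per-user mean of the support indicator
  have hmean : ∀ (u : Fin n) (v : V),
      ∑ s : LolohaSample V g, w u s * (if s.1 v = s.2.2 then (1:ℝ) else 0)
        = q₁' + (if vu u = v then (p₁ - q₁') * (p₂ - q₂) else 0) := by
    intro u v
    simp only [hwdef]
    rw [Fintype.sum_prod_type]
    have hstep1 : ∀ H : V → Fin g,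
        ∑ zx : Fin g × Fin g, ((if H ∈ ℋ then (1:ℝ)/ℋ.card else 0) *
          (if zx.1 = H (vu u) then p₁ else q₁) * (if zx.2 = zx.1 then p₂ else q₂)) *
          (if H v = zx.2 then (1:ℝ) else 0)
        = (if H ∈ ℋ then (1:ℝ)/ℋ.card else 0) *
          ∑ z : Fin g, (if z = H (vu u) then p₁ else q₁) * (if z = H v then p₂ else q₂) := by
      intro H
      rw [Fintype.sum_prod_type]
      have hx : ∀ z : Fin g,
          ∑ x : Fin g, ((if H ∈ ℋ then (1:ℝ)/ℋ.card else 0) *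
            (if z = H (vu u) then p₁ else q₁) * (if x = z then p₂ else q₂)) *
            (if H v = x then (1:ℝ) else 0)
          = (if H ∈ ℋ then (1:ℝ)/ℋ.card else 0) *
            ((if z = H (vu u) then p₁ else q₁) * (if z = H v then p₂ else q₂)) := by
        intro z
        have he : ∀ x : Fin g, ((if H ∈ ℋ then (1:ℝ)/ℋ.card else 0) *
            (if z = H (vu u) then p₁ else q₁) * (if x = z then p₂ else q₂)) *
            (if H v = x then (1:ℝ) else 0)
            = if H v = x then ((if H ∈ ℋ then (1:ℝ)/ℋ.card else 0) *
            ((if z = H (vu u) then p₁ else q₁) * (if x = z then p₂ else q₂))) else 0 := by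
          intro x; split_ifs <;> ring
        rw [Finset.sum_congr rfl fun x _ => he x, Finset.sum_ite_eq]
        simp only [Finset.mem_univ, if_true]
        have : (if H v = z then p₂ else q₂) = (if z = H v then p₂ else q₂) := by
          simp [eq_comm]
        rw [this]
      rw [Finset.sum_congr rfl fun z _ => hx z, ← Finset.mul_sum]
    rw [Finset.sum_congr rfl fun H _ => hstep1 H]
    by_cases hv : vu u = v
    · subst hv
      have hz : ∀ H : V → Fin g,
          ∑ z : Fin g, (if z = H (vu u) then p₁ else q₁) * (if z = H (vu u) then p₂ else q₂)
          = q₁' + (p₁ - q₁') * (p₂ - q₂) := by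
        intro H
        have hcomb : ∀ z : Fin g, (if z = H (vu u) then p₁ else q₁) * (if z = H (vu u) then p₂ else q₂)
            = if z = H (vu u) then p₁ * p₂ else q₁ * q₂ := by intro z; split_ifs <;> ring
        rw [Finset.sum_congr rfl fun z _ => hcomb z, sum_ite_const' (p₁*p₂) (q₁*q₂) (H (vu u))]
        linear_combination hA
      rw [Finset.sum_congr rfl fun H _ => by rw [hz H], ← Finset.sum_mul, hHsum, one_mul, if_pos rfl]
    · have hvw : v ≠ vu u := fun h => hv h.symm
      have hgn : 0 < g := by omega
      have hpull : ∀ H : V → Fin g, (if H ∈ ℋ then (1:ℝ)/ℋ.card else 0) *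
          (∑ z : Fin g, (if z = H (vu u) then p₁ else q₁) * (if z = H v then p₂ else q₂))
          = if H ∈ ℋ then ((1:ℝ)/ℋ.card) *
            (∑ z : Fin g, (if z = H (vu u) then p₁ else q₁) * (if z = H v then p₂ else q₂)) else 0 := by
        intro H; split_ifs <;> simp
      rw [Finset.sum_congr rfl fun H _ => hpull H, Finset.sum_ite_mem, Finset.univ_inter,
        ← Finset.mul_sum]
      rw [pairwise_count_sum' hgn ℋ (hpi v (vu u) hvw)
        (fun a b => ∑ z : Fin g, (if z = b then p₁ else q₁) * (if z = a then p₂ else q₂))]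
      have hsum2 : ∑ a : Fin g, ∑ b : Fin g,
          (∑ z : Fin g, (if z = b then p₁ else q₁) * (if z = a then p₂ else q₂)) = (g:ℝ) := by
        have hperA : ∀ a : Fin g, ∑ b : Fin g,
            (∑ z : Fin g, (if z = b then p₁ else q₁) * (if z = a then p₂ else q₂)) = 1 := by
          intro a
          rw [Finset.sum_comm]
          have hz : ∀ z : Fin g, ∑ b : Fin g,
              (if z = b then p₁ else q₁) * (if z = a then p₂ else q₂)
              = (if z = a then p₂ else q₂) := by
            intro z
            rw [← Finset.sum_mul]
            have : ∑ b : Fin g, (if z = b then p₁ else q₁) = 1 := by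
              have he : ∀ b : Fin g, (if z = b then p₁ else q₁) = (if b = z then p₁ else q₁) := by
                intro b; simp [eq_comm]
              rw [Finset.sum_congr rfl fun b _ => he b, sum_ite_const' p₁ q₁ z, hp₁q₁]
            rw [this, one_mul]
          rw [Finset.sum_congr rfl fun z _ => hz z, sum_ite_const' p₂ q₂ a, hp₂q₂]
        rw [Finset.sum_congr rfl fun a _ => hperA a, Finset.sum_const, nsmul_eq_mul,
          Finset.card_univ, Fintype.card_fin, mul_one]
      rw [hsum2, if_neg hv, add_zero, hq₁']
      field_simp
  -- total mass
  have htotal : ∑ ω : Fin n → LolohaSample V g, lolohaWeight V g n ℋ p₁ q₁ p₂ q₂ vu ω = 1 := by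
    rw [Finset.sum_congr rfl fun ω _ => hWeq ω, prod_sum_pi' w,
      Finset.prod_congr rfl fun u _ => hw_sum u, Finset.prod_const_one]
  set t : ℝ := Real.sqrt ((k : ℝ) / (4 * n * β * (p₁ - q₁') ^ 2 * (p₂ - q₂) ^ 2)) with htdef
  by_cases hk0 : k = 0
  · have hVempty : IsEmpty V := Fintype.card_eq_zero_iff.1 (by rw [hk, hk0])
    have hfil : (Finset.univ.filter (fun ω : Fin n → LolohaSample V g =>
        ∀ v : V, |lolohaEst V g n p₁ q₁' p₂ q₂ v ω - lolohaTrueFreq V n vu v| < t))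
        = Finset.univ :=
      Finset.filter_true_of_mem fun ω _ => fun v => (hVempty.false v).elim
    rw [hfil, htotal]; linarith
  -- main case
  have hk1 : (0:ℝ) < (k:ℝ) := by exact_mod_cast Nat.pos_of_ne_zero hk0
  have hden4 : (0:ℝ) < 4 * (n:ℝ) * β * (p₁ - q₁') ^ 2 * (p₂ - q₂) ^ 2 :=
    mul_pos (mul_pos (mul_pos (by linarith) hβ0) (pow_pos ha 2)) (pow_pos hb 2)
  have harg : 0 < (k:ℝ) / (4 * n * β * (p₁ - q₁') ^ 2 * (p₂ - q₂) ^ 2) := div_pos hk1 hden4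
  have ht2 : t ^ 2 = (k:ℝ) / (4 * n * β * (p₁ - q₁') ^ 2 * (p₂ - q₂) ^ 2) :=
    Real.sq_sqrt harg.le
  have ht0 : 0 < t := Real.sqrt_pos.2 harg
  -- per-v Chebyshev bound
  have key : ∀ v : V,
      ∑ ω ∈ Finset.univ.filter (fun ω : Fin n → LolohaSample V g =>
          t ≤ |lolohaEst V g n p₁ q₁' p₂ q₂ v ω - lolohaTrueFreq V n vu v|),
        lolohaWeight V g n ℋ p₁ q₁ p₂ q₂ vu ω ≤ β / k := by
    intro v
    set X : LolohaSample V g → ℝ := fun s => if s.1 v = s.2.2 then (1:ℝ) else 0 with hXdef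
    set μ : Fin n → ℝ := fun u => q₁' + (if vu u = v then (p₁ - q₁') * (p₂ - q₂) else 0) with hμdef
    set Y : Fin n → LolohaSample V g → ℝ := fun u s => X s - μ u with hYdef
    set T : (Fin n → LolohaSample V g) → ℝ := fun ω => ∑ u, Y u (ω u) with hTdef
    have hmean' : ∀ u : Fin n, ∑ s : LolohaSample V g, w u s * X s = μ u := by
      intro u
      simp only [hXdef, hμdef]
      exact hmean u v
    have hY0 : ∀ u, ∑ s : LolohaSample V g, w u s * Y u s = 0 := by
      intro u
      simp only [hYdef, mul_sub]
      rw [Finset.sum_sub_distrib, hmean' u, ← Finset.sum_mul, hw_sum u, one_mul, sub_self]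
    have hY2 : ∀ u, ∑ s : LolohaSample V g, w u s * (Y u s * Y u s) ≤ 1/4 := by
      intro u
      have hXid : ∀ s, Y u s * Y u s = (1 - 2 * μ u) * X s + μ u * μ u := by
        intro s; simp only [hYdef, hXdef]; split_ifs <;> ring
      have hcalc : ∑ s : LolohaSample V g, w u s * (Y u s * Y u s)
          = (1 - 2 * μ u) * (μ u) + (μ u * μ u) * 1 := by
        have hpt : ∀ s : LolohaSample V g, w u s * (Y u s * Y u s)
            = (1 - 2 * μ u) * (w u s * X s) + (μ u * μ u) * w u s := by
          intro s; rw [hXid s]; ring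
        rw [Finset.sum_congr rfl fun s _ => hpt s, Finset.sum_add_distrib,
          ← Finset.mul_sum, ← Finset.mul_sum, hmean' u, hw_sum u]
      rw [hcalc]; exact quad_bound' (μ u)
    have hT2 : ∑ ω : Fin n → LolohaSample V g,
        lolohaWeight V g n ℋ p₁ q₁ p₂ q₂ vu ω * (T ω * T ω) ≤ (n:ℝ)/4 := by
      have hcross : ∀ u u' : Fin n, u ≠ u' →
          ∑ ω : Fin n → LolohaSample V g,
            (∏ w' : Fin n, w w' (ω w')) * (Y u (ω u) * Y u' (ω u')) = 0 := by
        intro u u' huu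
        have hrw : ∀ ω : Fin n → LolohaSample V g,
            (∏ w' : Fin n, w w' (ω w')) * (Y u (ω u) * Y u' (ω u'))
            = ∏ w' : Fin n, (w w' (ω w') *
                (if w' = u then Y u (ω w') else if w' = u' then Y u' (ω w') else 1)) := by
          intro ω
          conv_rhs => rw [Finset.prod_mul_distrib,
            prod_two_ite' huu (fun w' => Y u (ω w')) (fun w' => Y u' (ω w'))]
        rw [Finset.sum_congr rfl fun ω _ => hrw ω,
          prod_sum_pi' (fun w' s => w w' s * (if w' = u then Y u s else if w' = u' then Y u' s else 1))]
        apply Finset.prod_eq_zero (Finset.mem_univ u)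
        simp only [if_pos rfl]
        exact hY0 u
      have hdiag : ∀ u : Fin n,
          ∑ ω : Fin n → LolohaSample V g,
            (∏ w' : Fin n, w w' (ω w')) * (Y u (ω u) * Y u (ω u)) ≤ 1/4 := by
        intro u
        have hrw : ∀ ω : Fin n → LolohaSample V g,
            (∏ w' : Fin n, w w' (ω w')) * (Y u (ω u) * Y u (ω u))
            = ∏ w' : Fin n, (w w' (ω w') * (if w' = u then Y u (ω w') * Y u (ω w') else 1)) := by
          intro ω
          conv_rhs => rw [Finset.prod_mul_distrib,
            Finset.prod_ite_eq' Finset.univ u (fun w' => Y u (ω w') * Y u (ω w'))]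
          simp
        rw [Finset.sum_congr rfl fun ω _ => hrw ω,
          prod_sum_pi' (fun w' s => w w' s * (if w' = u then Y u s * Y u s else 1))]
        rw [Finset.prod_eq_single u
          (fun b _ hb => by rw [Finset.sum_congr rfl fun s _ => by rw [if_neg hb, mul_one], hw_sum b])
          (fun h => absurd (Finset.mem_univ u) h)]
        simp only [if_pos rfl]
        exact hY2 u
      have expand : ∀ ω : Fin n → LolohaSample V g,
          lolohaWeight V g n ℋ p₁ q₁ p₂ q₂ vu ω * (T ω * T ω)
          = ∑ u : Fin n, ∑ u' : Fin n,
              (∏ w' : Fin n, w w' (ω w')) * (Y u (ω u) * Y u' (ω u')) := by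
        intro ω
        rw [hWeq ω]
        simp only [hTdef]
        rw [Finset.sum_mul_sum]
        rw [Finset.mul_sum]
        exact Finset.sum_congr rfl fun u _ => Finset.mul_sum _ _ _
      rw [Finset.sum_congr rfl fun ω _ => expand ω, Finset.sum_comm]
      have hswap : ∀ u : Fin n,
          ∑ ω : Fin n → LolohaSample V g, ∑ u' : Fin n,
            (∏ w' : Fin n, w w' (ω w')) * (Y u (ω u) * Y u' (ω u'))
          = ∑ u' : Fin n, ∑ ω : Fin n → LolohaSample V g,
            (∏ w' : Fin n, w w' (ω w')) * (Y u (ω u) * Y u' (ω u')) :=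
        fun u => Finset.sum_comm
      rw [Finset.sum_congr rfl fun u _ => hswap u]
      have hrow : ∀ u : Fin n,
          ∑ u' : Fin n, ∑ ω : Fin n → LolohaSample V g,
            (∏ w' : Fin n, w w' (ω w')) * (Y u (ω u) * Y u' (ω u')) ≤ 1/4 := by
        intro u
        rw [Finset.sum_eq_single_of_mem u (Finset.mem_univ u)
          (fun b _ hb => hcross u b (Ne.symm hb))]
        exact hdiag u
      calc ∑ u : Fin n, ∑ u' : Fin n, ∑ ω : Fin n → LolohaSample V g,
            (∏ w' : Fin n, w w' (ω w')) * (Y u (ω u) * Y u' (ω u'))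
          ≤ ∑ _u : Fin n, (1/4 : ℝ) := Finset.sum_le_sum fun u _ => hrow u
        _ = (n:ℝ)/4 := by
            rw [Finset.sum_const, Finset.card_univ, Fintype.card_fin, nsmul_eq_mul]; ring
    -- relation between T and the estimator
    have hTrel : ∀ ω : Fin n → LolohaSample V g,
        T ω = ((n:ℝ) * (p₁ - q₁') * (p₂ - q₂)) *
          (lolohaEst V g n p₁ q₁' p₂ q₂ v ω - lolohaTrueFreq V n vu v) := by
      intro ω
      have hXC : ∑ u : Fin n, X (ω u) = (lolohaCount V g n v ω : ℝ) := by
        simp only [hXdef, lolohaCount]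
        rw [Finset.sum_boole]
      have hμsum : ∑ u : Fin n, μ u = (n:ℝ) * q₁' +
          ((Finset.univ.filter fun u : Fin n => vu u = v).card : ℝ) * ((p₁ - q₁') * (p₂ - q₂)) := by
        simp only [hμdef]
        rw [Finset.sum_add_distrib, Finset.sum_const, Finset.card_univ, Fintype.card_fin,
          nsmul_eq_mul]
        congr 1
        have : ∀ u : Fin n, (if vu u = v then (p₁ - q₁') * (p₂ - q₂) else 0)
            = (if vu u = v then (1:ℝ) else 0) * ((p₁ - q₁') * (p₂ - q₂)) := by
          intro u; split_ifs <;> ring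
        rw [Finset.sum_congr rfl fun u _ => this u, ← Finset.sum_mul, Finset.sum_boole]
      have hTval : T ω = (lolohaCount V g n v ω : ℝ) - ((n:ℝ) * q₁' +
          ((Finset.univ.filter fun u : Fin n => vu u = v).card : ℝ) * ((p₁ - q₁') * (p₂ - q₂))) := by
        rw [hTdef]
        simp only [hYdef]
        rw [Finset.sum_sub_distrib, hXC, hμsum]
      rw [hTval]
      simp only [lolohaEst, lolohaTrueFreq]
      have hnab : (n:ℝ) * (p₁ - q₁') * (p₂ - q₂) ≠ 0 := by positivity
      field_simp
      linear_combination (n:ℝ) * hqb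
    -- Markov / Chebyshev step
    set cc : ℝ := ((n:ℝ) * (p₁ - q₁') * (p₂ - q₂) * t) ^ 2 with hccdef
    have hcc : 0 < cc := by positivity
    have hTsq : ∀ ω ∈ Finset.univ.filter (fun ω : Fin n → LolohaSample V g =>
        t ≤ |lolohaEst V g n p₁ q₁' p₂ q₂ v ω - lolohaTrueFreq V n vu v|),
        cc ≤ T ω * T ω := by
      intro ω hω
      have habs : t ≤ |lolohaEst V g n p₁ q₁' p₂ q₂ v ω - lolohaTrueFreq V n vu v| :=
        (Finset.mem_filter.1 hω).2
      set d := lolohaEst V g n p₁ q₁' p₂ q₂ v ω - lolohaTrueFreq V n vu v with hd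
      have hd2 : t ^ 2 ≤ d ^ 2 := by
        calc t ^ 2 ≤ |d| ^ 2 := pow_le_pow_left₀ ht0.le habs 2
          _ = d ^ 2 := sq_abs d
      have hTT : T ω * T ω = ((n:ℝ) * (p₁ - q₁') * (p₂ - q₂)) ^ 2 * d ^ 2 := by
        rw [hTrel ω]; ring
      have hcc2 : cc = ((n:ℝ) * (p₁ - q₁') * (p₂ - q₂)) ^ 2 * t ^ 2 := by rw [hccdef]; ring
      rw [hTT, hcc2]
      exact mul_le_mul_of_nonneg_left hd2 (sq_nonneg _)
    have hccval : cc = (n:ℝ) * k / (4 * β) := by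
      rw [hccdef, mul_pow, ht2]
      field_simp
    calc ∑ ω ∈ Finset.univ.filter (fun ω : Fin n → LolohaSample V g =>
            t ≤ |lolohaEst V g n p₁ q₁' p₂ q₂ v ω - lolohaTrueFreq V n vu v|),
          lolohaWeight V g n ℋ p₁ q₁ p₂ q₂ vu ω
        ≤ ∑ ω ∈ Finset.univ.filter (fun ω : Fin n → LolohaSample V g =>
            t ≤ |lolohaEst V g n p₁ q₁' p₂ q₂ v ω - lolohaTrueFreq V n vu v|),
          lolohaWeight V g n ℋ p₁ q₁ p₂ q₂ vu ω * ((T ω * T ω) / cc) := by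
          apply Finset.sum_le_sum
          intro ω hω
          have h1 : (1:ℝ) ≤ (T ω * T ω) / cc := (one_le_div hcc).2 (hTsq ω hω)
          calc lolohaWeight V g n ℋ p₁ q₁ p₂ q₂ vu ω
              = lolohaWeight V g n ℋ p₁ q₁ p₂ q₂ vu ω * 1 := (mul_one _).symm
            _ ≤ lolohaWeight V g n ℋ p₁ q₁ p₂ q₂ vu ω * ((T ω * T ω) / cc) :=
                mul_le_mul_of_nonneg_left h1 (hW_nonneg ω)
      _ ≤ ∑ ω : Fin n → LolohaSample V g,
          lolohaWeight V g n ℋ p₁ q₁ p₂ q₂ vu ω * ((T ω * T ω) / cc) :=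
          Finset.sum_le_sum_of_subset_of_nonneg (Finset.filter_subset _ _)
            (fun ω _ _ => mul_nonneg (hW_nonneg ω)
              (div_nonneg (mul_self_nonneg _) hcc.le))
      _ = (∑ ω : Fin n → LolohaSample V g,
          lolohaWeight V g n ℋ p₁ q₁ p₂ q₂ vu ω * (T ω * T ω)) / cc := by
          rw [Finset.sum_div]
          exact Finset.sum_congr rfl fun ω _ => (mul_div_assoc _ _ _).symm
      _ ≤ ((n:ℝ)/4) / cc := by
          exact (div_le_div_iff_of_pos_right hcc).2 hT2
      _ = β / k := by
          rw [hccval]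
          field_simp
  -- union bound and conclusion
  have hsplit := Finset.sum_filter_add_sum_filter_not Finset.univ
    (fun ω : Fin n → LolohaSample V g =>
      ∀ v : V, |lolohaEst V g n p₁ q₁' p₂ q₂ v ω - lolohaTrueFreq V n vu v| < t)
    (lolohaWeight V g n ℋ p₁ q₁ p₂ q₂ vu)
  have hbad : ∑ ω ∈ Finset.univ.filter (fun ω : Fin n → LolohaSample V g =>
      ¬ ∀ v : V, |lolohaEst V g n p₁ q₁' p₂ q₂ v ω - lolohaTrueFreq V n vu v| < t),
      lolohaWeight V g n ℋ p₁ q₁ p₂ q₂ vu ω ≤ β := by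
    have hsub : Finset.univ.filter (fun ω : Fin n → LolohaSample V g =>
        ¬ ∀ v : V, |lolohaEst V g n p₁ q₁' p₂ q₂ v ω - lolohaTrueFreq V n vu v| < t)
        ⊆ Finset.univ.biUnion (fun v : V => Finset.univ.filter
          (fun ω : Fin n → LolohaSample V g =>
            t ≤ |lolohaEst V g n p₁ q₁' p₂ q₂ v ω - lolohaTrueFreq V n vu v|)) := by
      intro ω hω
      rw [Finset.mem_filter] at hω
      push_neg at hω
      obtain ⟨v, hv⟩ := hω.2
      rw [Finset.mem_biUnion]
      exact ⟨v, Finset.mem_univ v, Finset.mem_filter.2 ⟨Finset.mem_univ ω, not_lt.1 (by exact fun h => absurd h (not_lt.2 hv))⟩⟩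
    calc ∑ ω ∈ Finset.univ.filter (fun ω : Fin n → LolohaSample V g =>
          ¬ ∀ v : V, |lolohaEst V g n p₁ q₁' p₂ q₂ v ω - lolohaTrueFreq V n vu v| < t),
          lolohaWeight V g n ℋ p₁ q₁ p₂ q₂ vu ω
        ≤ ∑ ω ∈ Finset.univ.biUnion (fun v : V => Finset.univ.filter
            (fun ω : Fin n → LolohaSample V g =>
              t ≤ |lolohaEst V g n p₁ q₁' p₂ q₂ v ω - lolohaTrueFreq V n vu v|)),
          lolohaWeight V g n ℋ p₁ q₁ p₂ q₂ vu ω :=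
          Finset.sum_le_sum_of_subset_of_nonneg hsub (fun ω _ _ => hW_nonneg ω)
      _ ≤ ∑ v : V, ∑ ω ∈ Finset.univ.filter (fun ω : Fin n → LolohaSample V g =>
            t ≤ |lolohaEst V g n p₁ q₁' p₂ q₂ v ω - lolohaTrueFreq V n vu v|),
          lolohaWeight V g n ℋ p₁ q₁ p₂ q₂ vu ω :=
          sum_biUnion_le' Finset.univ _ _ hW_nonneg
      _ ≤ ∑ _v : V, β / k := Finset.sum_le_sum fun v _ => key v
      _ = β := by
          rw [Finset.sum_const, Finset.card_univ, hk, nsmul_eq_mul]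
          field_simp
  linarith [hsplit, htotal, hbad]
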